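/- Associativity of comma is admissible in GwIKt: if Γ[Δ₁, (Δ₂, Δ₃)] ⇒ β is derivable then Γ[(Δ₁, Δ₂), Δ₃] ⇒ β is derivable, and conversely. -/
import Mathlib


/-- Formulas of weak intuitionistic tense logic. -/
inductive Fml : Type
  | var : ℕ → Fml
  | top : Fml
  | bot : Fml
  | imp : Fml → Fml → Fml
  | and : Fml → Fml → Fml
  | or  : Fml → Fml → Fml
  | dia : Fml → Fml   -- ◇ (future diamond)
  | box : Fml → Fml   -- □ (future box)
  | bdia : Fml → Fml  -- ◆ (past diamond)
  | bbox : Fml → Fml  -- ■ (past box)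

/-- Atomic formulas: variables, ⊤, ⊥. -/
def Fml.Atomic : Fml → Prop
  | .var _ => True
  | .top => True
  | .bot => True
  | _ => False

/-- Formula structures: formulas closed under comma, ∘, •. -/
inductive FS : Type
  | fml : Fml → FS
  | comma : FS → FS → FS
  | circ : FS → FS    -- ∘, structural ◇
  | bullet : FS → FS  -- •, structural ◆

/-- Single-hole contexts. -/
inductive Ctx : Type
  | hole : Ctx
  | commaL : Ctx → FS → Ctx
  | commaR : FS → Ctx → Ctx
  | circ : Ctx → Ctx
  | bullet : Ctx → Ctx

/-- Fill the hole of a context with a structure. -/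
def Ctx.plug : Ctx → FS → FS
  | .hole, Δ => Δ
  | .commaL C Γ, Δ => .comma (C.plug Δ) Γ
  | .commaR Γ C, Δ => .comma Γ (C.plug Δ)
  | .circ C, Δ => .circ (C.plug Δ)
  | .bullet C, Δ => .bullet (C.plug Δ)

/-- Multi-hole contexts (for the mix rules Γ[·]ⁿ). -/
inductive MCtx : Type
  | hole : MCtx
  | fml : Fml → MCtx
  | comma : MCtx → MCtx → MCtx
  | circ : MCtx → MCtx
  | bullet : MCtx → MCtx

/-- Fill all holes of a multi-context with the same structure. -/
def MCtx.plug : MCtx → FS → FS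
  | .hole, Δ => Δ
  | .fml α, _ => .fml α
  | .comma C D, Δ => .comma (C.plug Δ) (D.plug Δ)
  | .circ C, Δ => .circ (C.plug Δ)
  | .bullet C, Δ => .bullet (C.plug Δ)

/-- Number n of designated occurrences in Γ[·]ⁿ. -/
def MCtx.holes : MCtx → ℕ
  | .hole => 1
  | .fml _ => 0
  | .comma C D => C.holes + D.holes
  | .circ C => C.holes
  | .bullet C => C.holes

/-- Cut formulas allowed in (Cut_*): not atomic, not □- or ■-formulas, not implications. -/
def Fml.Starish (α : Fml) : Prop :=
  ¬ α.Atomic ∧ (∀ a, α ≠ .box a) ∧ (∀ a, α ≠ .bbox a) ∧ (∀ a b, α ≠ .imp a b)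

/-- Flags selecting the variant of the calculus:
`idFull`: unrestricted identity axiom (Id) vs atomic (Id_A);
`conF`: full formula contraction (Con_F) vs the restricted contractions
(Con_A), (Con_□), (Con_■), (Con_→);
`cut`: the single cut rule (Cut);
`mix`: the four cut-like rules (Mix_A), (Mix_□), (Mix_■), (Mix_→), (Cut_*). -/
structure Rules where
  idFull : Bool
  conF : Bool
  cut : Bool
  mix : Bool

/-- `DerH R n Γ β`: the sequent Γ ⇒ β has a derivation of height at most `n`
in the calculus determined by `R`. -/
inductive DerH (R : Rules) : ℕ → FS → Fml → Prop
  -- (Id_A)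
  | idA (n : ℕ) (α : Fml) : 1 ≤ n → α.Atomic → DerH R n (.fml α) α
  -- (Id), only in calculi with unrestricted identity
  | idF (n : ℕ) (α : Fml) : R.idFull = true → 1 ≤ n → DerH R n (.fml α) α
  -- (⊤)
  | topL (n : ℕ) (Γ : Ctx) (Δ : FS) (β : Fml) :
      DerH R n (Γ.plug (.fml .top)) β → DerH R (n + 1) (Γ.plug Δ) β
  -- (⊥)
  | botL (n : ℕ) (Γ : Ctx) (Δ : FS) (β : Fml) :
      DerH R n Δ .bot → DerH R (n + 1) (Γ.plug Δ) β
  -- (∧L)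
  | andL (n : ℕ) (Γ : Ctx) (α₁ α₂ β : Fml) :
      DerH R n (Γ.plug (.comma (.fml α₁) (.fml α₂))) β →
      DerH R (n + 1) (Γ.plug (.fml (α₁.and α₂))) β
  -- (∧R)
  | andR (n : ℕ) (Γ : FS) (β₁ β₂ : Fml) :
      DerH R n Γ β₁ → DerH R n Γ β₂ → DerH R (n + 1) Γ (β₁.and β₂)
  -- (∨L)
  | orL (n : ℕ) (Γ : Ctx) (α₁ α₂ β : Fml) :
      DerH R n (Γ.plug (.fml α₁)) β → DerH R n (Γ.plug (.fml α₂)) β →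
      DerH R (n + 1) (Γ.plug (.fml (α₁.or α₂))) β
  -- (∨R), i = 1
  | orR₁ (n : ℕ) (Γ : FS) (β₁ β₂ : Fml) :
      DerH R n Γ β₁ → DerH R (n + 1) Γ (β₁.or β₂)
  -- (∨R), i = 2
  | orR₂ (n : ℕ) (Γ : FS) (β₁ β₂ : Fml) :
      DerH R n Γ β₂ → DerH R (n + 1) Γ (β₁.or β₂)
  -- (→L)
  | impL (n : ℕ) (Γ : Ctx) (Δ : FS) (α₁ α₂ β : Fml) :
      DerH R n Δ α₁ → DerH R n (Γ.plug (.fml α₂)) β →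
      DerH R (n + 1) (Γ.plug (.comma Δ (.fml (α₁.imp α₂)))) β
  -- (→R)
  | impR (n : ℕ) (Γ : FS) (β₁ β₂ : Fml) :
      DerH R n (.comma (.fml β₁) Γ) β₂ → DerH R (n + 1) Γ (β₁.imp β₂)
  -- (◇L)
  | diaL (n : ℕ) (Γ : Ctx) (α β : Fml) :
      DerH R n (Γ.plug (.circ (.fml α))) β → DerH R (n + 1) (Γ.plug (.fml (α.dia))) β
  -- (◇R)
  | diaR (n : ℕ) (Γ : FS) (β : Fml) :
      DerH R n Γ β → DerH R (n + 1) (.circ Γ) (β.dia)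
  -- (◆L)
  | bdiaL (n : ℕ) (Γ : Ctx) (α β : Fml) :
      DerH R n (Γ.plug (.bullet (.fml α))) β → DerH R (n + 1) (Γ.plug (.fml (α.bdia))) β
  -- (◆R)
  | bdiaR (n : ℕ) (Γ : FS) (β : Fml) :
      DerH R n Γ β → DerH R (n + 1) (.bullet Γ) (β.bdia)
  -- (■L)
  | bboxL (n : ℕ) (Γ : Ctx) (α β : Fml) :
      DerH R n (Γ.plug (.fml α)) β → DerH R (n + 1) (Γ.plug (.circ (.fml (α.bbox)))) β
  -- (■R)
  | bboxR (n : ℕ) (Γ : FS) (β : Fml) :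
      DerH R n (.circ Γ) β → DerH R (n + 1) Γ (β.bbox)
  -- (□L)
  | boxL (n : ℕ) (Γ : Ctx) (α β : Fml) :
      DerH R n (Γ.plug (.fml α)) β → DerH R (n + 1) (Γ.plug (.bullet (.fml (α.box)))) β
  -- (□R)
  | boxR (n : ℕ) (Γ : FS) (β : Fml) :
      DerH R n (.bullet Γ) β → DerH R (n + 1) Γ (β.box)
  -- (Con∘)
  | conCirc (n : ℕ) (Γ : Ctx) (Δ₁ Δ₂ : FS) (β : Fml) :
      DerH R n (Γ.plug (.comma (.circ Δ₁) (.circ Δ₂))) β →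
      DerH R (n + 1) (Γ.plug (.circ (.comma Δ₁ Δ₂))) β
  -- (Con•)
  | conBullet (n : ℕ) (Γ : Ctx) (Δ₁ Δ₂ : FS) (β : Fml) :
      DerH R n (Γ.plug (.comma (.bullet Δ₁) (.bullet Δ₂))) β →
      DerH R (n + 1) (Γ.plug (.bullet (.comma Δ₁ Δ₂))) β
  -- (Con_F), only with full contraction
  | conF (n : ℕ) (Γ : Ctx) (α β : Fml) : R.conF = true →
      DerH R n (Γ.plug (.comma (.fml α) (.fml α))) β →
      DerH R (n + 1) (Γ.plug (.fml α)) β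
  -- (Con_A), only in the restricted calculi
  | conA (n : ℕ) (Γ : Ctx) (α β : Fml) : R.conF = false → α.Atomic →
      DerH R n (Γ.plug (.comma (.fml α) (.fml α))) β →
      DerH R (n + 1) (Γ.plug (.fml α)) β
  -- (Con_□)
  | conBox (n : ℕ) (Γ : Ctx) (α β : Fml) : R.conF = false →
      DerH R n (Γ.plug (.comma (.fml α.box) (.fml α.box))) β →
      DerH R (n + 1) (Γ.plug (.fml α.box)) β
  -- (Con_■)
  | conBBox (n : ℕ) (Γ : Ctx) (α β : Fml) : R.conF = false →
      DerH R n (Γ.plug (.comma (.fml α.bbox) (.fml α.bbox))) β →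
      DerH R (n + 1) (Γ.plug (.fml α.bbox)) β
  -- (Con_→)
  | conImp (n : ℕ) (Γ : Ctx) (α₁ α₂ β : Fml) : R.conF = false →
      DerH R n (Γ.plug (.comma (.fml (α₁.imp α₂)) (.fml (α₁.imp α₂)))) β →
      DerH R (n + 1) (Γ.plug (.fml (α₁.imp α₂))) β
  -- (Wk), i = 1
  | wk₁ (n : ℕ) (Γ : Ctx) (Δ₁ Δ₂ : FS) (β : Fml) :
      DerH R n (Γ.plug Δ₁) β → DerH R (n + 1) (Γ.plug (.comma Δ₁ Δ₂)) β
  -- (Wk), i = 2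
  | wk₂ (n : ℕ) (Γ : Ctx) (Δ₁ Δ₂ : FS) (β : Fml) :
      DerH R n (Γ.plug Δ₂) β → DerH R (n + 1) (Γ.plug (.comma Δ₁ Δ₂)) β
  -- (Ex)
  | ex (n : ℕ) (Γ : Ctx) (Δ₁ Δ₂ : FS) (β : Fml) :
      DerH R n (Γ.plug (.comma Δ₁ Δ₂)) β → DerH R (n + 1) (Γ.plug (.comma Δ₂ Δ₁)) β
  -- (Dual∘•)
  | dualCB (n : ℕ) (Γ : Ctx) (Δ₁ Δ₂ : FS) (β : Fml) :
      DerH R n (.comma (.circ Δ₁) Δ₂) .bot →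
      DerH R (n + 1) (Γ.plug (.comma Δ₁ (.bullet Δ₂))) β
  -- (Dual•∘)
  | dualBC (n : ℕ) (Γ : Ctx) (Δ₁ Δ₂ : FS) (β : Fml) :
      DerH R n (.comma (.bullet Δ₁) Δ₂) .bot →
      DerH R (n + 1) (Γ.plug (.comma Δ₁ (.circ Δ₂))) β
  -- (Cut)
  | cut (n : ℕ) (Γ : Ctx) (Δ : FS) (α β : Fml) : R.cut = true →
      DerH R n Δ α → DerH R n (Γ.plug (.fml α)) β → DerH R (n + 1) (Γ.plug Δ) β
  -- (Mix_A)
  | mixA (n : ℕ) (Γ : MCtx) (Δ : FS) (α β : Fml) : R.mix = true →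
      α.Atomic → 1 ≤ Γ.holes →
      DerH R n Δ α → DerH R n (Γ.plug (.fml α)) β → DerH R (n + 1) (Γ.plug Δ) β
  -- (Mix_□)
  | mixBox (n : ℕ) (Γ : MCtx) (Δ : FS) (α β : Fml) : R.mix = true →
      1 ≤ Γ.holes →
      DerH R n Δ α.box → DerH R n (Γ.plug (.fml α.box)) β → DerH R (n + 1) (Γ.plug Δ) β
  -- (Mix_■)
  | mixBBox (n : ℕ) (Γ : MCtx) (Δ : FS) (α β : Fml) : R.mix = true →
      1 ≤ Γ.holes →
      DerH R n Δ α.bbox → DerH R n (Γ.plug (.fml α.bbox)) β → DerH R (n + 1) (Γ.plug Δ) β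
  -- (Mix_→)
  | mixImp (n : ℕ) (Γ : MCtx) (Δ : FS) (α₁ α₂ β : Fml) : R.mix = true →
      1 ≤ Γ.holes →
      DerH R n Δ (α₁.imp α₂) → DerH R n (Γ.plug (.fml (α₁.imp α₂))) β →
      DerH R (n + 1) (Γ.plug Δ) β
  -- (Cut_*)
  | cutStar (n : ℕ) (Γ : Ctx) (Δ : FS) (α β : Fml) : R.mix = true →
      α.Starish →
      DerH R n Δ α → DerH R n (Γ.plug (.fml α)) β → DerH R (n + 1) (Γ.plug Δ) β

/-- Derivability (some height). -/
def Der (R : Rules) (Γ : FS) (β : Fml) : Prop := ∃ n, DerH R n Γ β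

/-- GwIKt: full identity, full contraction, with cut. -/
def GwIKt : Rules := ⟨true, true, true, false⟩
/-- GwIKt without the cut rule. -/
def GwIKtCF : Rules := ⟨true, true, false, false⟩
/-- GwIKt† : atomic identity, restricted contractions, with cut. -/
def GwIKtD : Rules := ⟨false, false, true, false⟩
/-- cut-free GwIKt†. -/
def GwIKtDCF : Rules := ⟨false, false, false, false⟩
/-- GwIKt‡ : cut replaced by the four cut-like rules. -/
def GwIKtDD : Rules := ⟨false, false, false, true⟩

/-! ### Auxiliary machinery for Statement 16 -/

/-- Height monotonicity of derivations. -/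
theorem DerH.mono {R : Rules} : ∀ {n : ℕ} {Γ : FS} {β : Fml}, DerH R n Γ β →
    ∀ {m : ℕ}, n ≤ m → DerH R m Γ β := by
  intro n Γ β h
  induction h with
  | idA n α h1 h2 => intro m hm; exact .idA m α (by omega) h2
  | idF n α hR h1 => intro m hm; exact .idF m α hR (by omega)
  | topL n Γ Δ β _ ih =>
      intro m hm; obtain ⟨k, rfl⟩ : ∃ k, m = k + 1 := ⟨m - 1, by omega⟩
      exact .topL k Γ Δ β (ih (by omega))
  | botL n Γ Δ β _ ih =>
      intro m hm; obtain ⟨k, rfl⟩ : ∃ k, m = k + 1 := ⟨m - 1, by omega⟩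
      exact .botL k Γ Δ β (ih (by omega))
  | andL n Γ α₁ α₂ β _ ih =>
      intro m hm; obtain ⟨k, rfl⟩ : ∃ k, m = k + 1 := ⟨m - 1, by omega⟩
      exact .andL k Γ α₁ α₂ β (ih (by omega))
  | andR n Γ β₁ β₂ _ _ ih1 ih2 =>
      intro m hm; obtain ⟨k, rfl⟩ : ∃ k, m = k + 1 := ⟨m - 1, by omega⟩
      exact .andR k Γ β₁ β₂ (ih1 (by omega)) (ih2 (by omega))
  | orL n Γ α₁ α₂ β _ _ ih1 ih2 =>
      intro m hm; obtain ⟨k, rfl⟩ : ∃ k, m = k + 1 := ⟨m - 1, by omega⟩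
      exact .orL k Γ α₁ α₂ β (ih1 (by omega)) (ih2 (by omega))
  | orR₁ n Γ β₁ β₂ _ ih =>
      intro m hm; obtain ⟨k, rfl⟩ : ∃ k, m = k + 1 := ⟨m - 1, by omega⟩
      exact .orR₁ k Γ β₁ β₂ (ih (by omega))
  | orR₂ n Γ β₁ β₂ _ ih =>
      intro m hm; obtain ⟨k, rfl⟩ : ∃ k, m = k + 1 := ⟨m - 1, by omega⟩
      exact .orR₂ k Γ β₁ β₂ (ih (by omega))
  | impL n Γ Δ α₁ α₂ β _ _ ih1 ih2 =>
      intro m hm; obtain ⟨k, rfl⟩ : ∃ k, m = k + 1 := ⟨m - 1, by omega⟩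
      exact .impL k Γ Δ α₁ α₂ β (ih1 (by omega)) (ih2 (by omega))
  | impR n Γ β₁ β₂ _ ih =>
      intro m hm; obtain ⟨k, rfl⟩ : ∃ k, m = k + 1 := ⟨m - 1, by omega⟩
      exact .impR k Γ β₁ β₂ (ih (by omega))
  | diaL n Γ α β _ ih =>
      intro m hm; obtain ⟨k, rfl⟩ : ∃ k, m = k + 1 := ⟨m - 1, by omega⟩
      exact .diaL k Γ α β (ih (by omega))
  | diaR n Γ β _ ih =>
      intro m hm; obtain ⟨k, rfl⟩ : ∃ k, m = k + 1 := ⟨m - 1, by omega⟩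
      exact .diaR k Γ β (ih (by omega))
  | bdiaL n Γ α β _ ih =>
      intro m hm; obtain ⟨k, rfl⟩ : ∃ k, m = k + 1 := ⟨m - 1, by omega⟩
      exact .bdiaL k Γ α β (ih (by omega))
  | bdiaR n Γ β _ ih =>
      intro m hm; obtain ⟨k, rfl⟩ : ∃ k, m = k + 1 := ⟨m - 1, by omega⟩
      exact .bdiaR k Γ β (ih (by omega))
  | bboxL n Γ α β _ ih =>
      intro m hm; obtain ⟨k, rfl⟩ : ∃ k, m = k + 1 := ⟨m - 1, by omega⟩
      exact .bboxL k Γ α β (ih (by omega))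
  | bboxR n Γ β _ ih =>
      intro m hm; obtain ⟨k, rfl⟩ : ∃ k, m = k + 1 := ⟨m - 1, by omega⟩
      exact .bboxR k Γ β (ih (by omega))
  | boxL n Γ α β _ ih =>
      intro m hm; obtain ⟨k, rfl⟩ : ∃ k, m = k + 1 := ⟨m - 1, by omega⟩
      exact .boxL k Γ α β (ih (by omega))
  | boxR n Γ β _ ih =>
      intro m hm; obtain ⟨k, rfl⟩ : ∃ k, m = k + 1 := ⟨m - 1, by omega⟩
      exact .boxR k Γ β (ih (by omega))
  | conCirc n Γ Δ₁ Δ₂ β _ ih =>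
      intro m hm; obtain ⟨k, rfl⟩ : ∃ k, m = k + 1 := ⟨m - 1, by omega⟩
      exact .conCirc k Γ Δ₁ Δ₂ β (ih (by omega))
  | conBullet n Γ Δ₁ Δ₂ β _ ih =>
      intro m hm; obtain ⟨k, rfl⟩ : ∃ k, m = k + 1 := ⟨m - 1, by omega⟩
      exact .conBullet k Γ Δ₁ Δ₂ β (ih (by omega))
  | conF n Γ α β hR _ ih =>
      intro m hm; obtain ⟨k, rfl⟩ : ∃ k, m = k + 1 := ⟨m - 1, by omega⟩
      exact .conF k Γ α β hR (ih (by omega))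
  | conA n Γ α β hR hA _ ih =>
      intro m hm; obtain ⟨k, rfl⟩ : ∃ k, m = k + 1 := ⟨m - 1, by omega⟩
      exact .conA k Γ α β hR hA (ih (by omega))
  | conBox n Γ α β hR _ ih =>
      intro m hm; obtain ⟨k, rfl⟩ : ∃ k, m = k + 1 := ⟨m - 1, by omega⟩
      exact .conBox k Γ α β hR (ih (by omega))
  | conBBox n Γ α β hR _ ih =>
      intro m hm; obtain ⟨k, rfl⟩ : ∃ k, m = k + 1 := ⟨m - 1, by omega⟩
      exact .conBBox k Γ α β hR (ih (by omega))
  | conImp n Γ α₁ α₂ β hR _ ih =>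
      intro m hm; obtain ⟨k, rfl⟩ : ∃ k, m = k + 1 := ⟨m - 1, by omega⟩
      exact .conImp k Γ α₁ α₂ β hR (ih (by omega))
  | wk₁ n Γ Δ₁ Δ₂ β _ ih =>
      intro m hm; obtain ⟨k, rfl⟩ : ∃ k, m = k + 1 := ⟨m - 1, by omega⟩
      exact .wk₁ k Γ Δ₁ Δ₂ β (ih (by omega))
  | wk₂ n Γ Δ₁ Δ₂ β _ ih =>
      intro m hm; obtain ⟨k, rfl⟩ : ∃ k, m = k + 1 := ⟨m - 1, by omega⟩
      exact .wk₂ k Γ Δ₁ Δ₂ β (ih (by omega))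
  | ex n Γ Δ₁ Δ₂ β _ ih =>
      intro m hm; obtain ⟨k, rfl⟩ : ∃ k, m = k + 1 := ⟨m - 1, by omega⟩
      exact .ex k Γ Δ₁ Δ₂ β (ih (by omega))
  | dualCB n Γ Δ₁ Δ₂ β _ ih =>
      intro m hm; obtain ⟨k, rfl⟩ : ∃ k, m = k + 1 := ⟨m - 1, by omega⟩
      exact .dualCB k Γ Δ₁ Δ₂ β (ih (by omega))
  | dualBC n Γ Δ₁ Δ₂ β _ ih =>
      intro m hm; obtain ⟨k, rfl⟩ : ∃ k, m = k + 1 := ⟨m - 1, by omega⟩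
      exact .dualBC k Γ Δ₁ Δ₂ β (ih (by omega))
  | cut n Γ Δ α β hR _ _ ih1 ih2 =>
      intro m hm; obtain ⟨k, rfl⟩ : ∃ k, m = k + 1 := ⟨m - 1, by omega⟩
      exact .cut k Γ Δ α β hR (ih1 (by omega)) (ih2 (by omega))
  | mixA n Γ Δ α β hR hA hh _ _ ih1 ih2 =>
      intro m hm; obtain ⟨k, rfl⟩ : ∃ k, m = k + 1 := ⟨m - 1, by omega⟩
      exact .mixA k Γ Δ α β hR hA hh (ih1 (by omega)) (ih2 (by omega))
  | mixBox n Γ Δ α β hR hh _ _ ih1 ih2 =>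
      intro m hm; obtain ⟨k, rfl⟩ : ∃ k, m = k + 1 := ⟨m - 1, by omega⟩
      exact .mixBox k Γ Δ α β hR hh (ih1 (by omega)) (ih2 (by omega))
  | mixBBox n Γ Δ α β hR hh _ _ ih1 ih2 =>
      intro m hm; obtain ⟨k, rfl⟩ : ∃ k, m = k + 1 := ⟨m - 1, by omega⟩
      exact .mixBBox k Γ Δ α β hR hh (ih1 (by omega)) (ih2 (by omega))
  | mixImp n Γ Δ α₁ α₂ β hR hh _ _ ih1 ih2 =>
      intro m hm; obtain ⟨k, rfl⟩ : ∃ k, m = k + 1 := ⟨m - 1, by omega⟩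
      exact .mixImp k Γ Δ α₁ α₂ β hR hh (ih1 (by omega)) (ih2 (by omega))
  | cutStar n Γ Δ α β hR hS _ _ ih1 ih2 =>
      intro m hm; obtain ⟨k, rfl⟩ : ∃ k, m = k + 1 := ⟨m - 1, by omega⟩
      exact .cutStar k Γ Δ α β hR hS (ih1 (by omega)) (ih2 (by omega))

/-- Formula translation of a structure. -/
def tauFS : FS → Fml
  | .fml a => a
  | .comma a b => (tauFS a).and (tauFS b)
  | .circ a => (tauFS a).dia
  | .bullet a => (tauFS a).bdia

/-- Composition of contexts. -/
def Ctx.comp : Ctx → Ctx → Ctx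
  | .hole, D => D
  | .commaL C Γ, D => .commaL (C.comp D) Γ
  | .commaR Γ C, D => .commaR Γ (C.comp D)
  | .circ C, D => .circ (C.comp D)
  | .bullet C, D => .bullet (C.comp D)

lemma Ctx.comp_plug (C D : Ctx) (Δ : FS) :
    (C.comp D).plug Δ = C.plug (D.plug Δ) := by
  induction C <;> simp [Ctx.comp, Ctx.plug, *]

lemma der_andR {Γ : FS} {β₁ β₂ : Fml} (h1 : Der GwIKt Γ β₁) (h2 : Der GwIKt Γ β₂) :
    Der GwIKt Γ (β₁.and β₂) := by
  obtain ⟨n1, h1⟩ := h1; obtain ⟨n2, h2⟩ := h2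
  exact ⟨max n1 n2 + 1, .andR _ _ _ _ (h1.mono (le_max_left _ _)) (h2.mono (le_max_right _ _))⟩

lemma der_wk1 {Γ : FS} (Δ : FS) {β : Fml} (h : Der GwIKt Γ β) :
    Der GwIKt (.comma Γ Δ) β := by
  obtain ⟨n, h⟩ := h; exact ⟨n + 1, .wk₁ n .hole Γ Δ β h⟩

lemma der_wk2 (Δ : FS) {Γ : FS} {β : Fml} (h : Der GwIKt Γ β) :
    Der GwIKt (.comma Δ Γ) β := by
  obtain ⟨n, h⟩ := h; exact ⟨n + 1, .wk₂ n .hole Δ Γ β h⟩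

/-- Every structure derives its formula translation. -/
lemma der_tau_self : ∀ Δ : FS, Der GwIKt Δ (tauFS Δ) := by
  intro Δ
  induction Δ with
  | fml a => exact ⟨1, .idF 1 a rfl le_rfl⟩
  | comma Δ₁ Δ₂ ih1 ih2 => exact der_andR (der_wk1 Δ₂ ih1) (der_wk2 Δ₁ ih2)
  | circ Δ ih => obtain ⟨n, h⟩ := ih; exact ⟨n + 1, .diaR n Δ _ h⟩
  | bullet Δ ih => obtain ⟨n, h⟩ := ih; exact ⟨n + 1, .bdiaR n Δ _ h⟩

/-- Compiling a structure occurrence into its formula translation on the left. -/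
lemma der_tauL : ∀ (Δ : FS) (Γ : Ctx) {β : Fml},
    Der GwIKt (Γ.plug Δ) β → Der GwIKt (Γ.plug (.fml (tauFS Δ))) β := by
  intro Δ
  induction Δ with
  | fml a => intro Γ β h; exact h
  | comma Δ₁ Δ₂ ih1 ih2 =>
      intro Γ β h
      have h1 := ih1 (Γ.comp (.commaL .hole Δ₂)) (by
        rw [Ctx.comp_plug]; exact h)
      rw [Ctx.comp_plug] at h1
      have h2 := ih2 (Γ.comp (.commaR (.fml (tauFS Δ₁)) .hole)) (by
        rw [Ctx.comp_plug]; exact h1)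
      rw [Ctx.comp_plug] at h2
      obtain ⟨n, h2⟩ := h2
      exact ⟨n + 1, .andL n Γ _ _ β h2⟩
  | circ Δ ih =>
      intro Γ β h
      have h1 := ih (Γ.comp (.circ .hole)) (by rw [Ctx.comp_plug]; exact h)
      rw [Ctx.comp_plug] at h1
      obtain ⟨n, h1⟩ := h1
      exact ⟨n + 1, .diaL n Γ _ β h1⟩
  | bullet Δ ih =>
      intro Γ β h
      have h1 := ih (Γ.comp (.bullet .hole)) (by rw [Ctx.comp_plug]; exact h)
      rw [Ctx.comp_plug] at h1
      obtain ⟨n, h1⟩ := h1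
      exact ⟨n + 1, .bdiaL n Γ _ β h1⟩

/-- Replacing a structure by any structure that derives its translation. -/
lemma der_replace (Γ : Ctx) (Δ Δ' : FS) {β : Fml}
    (h : Der GwIKt (Γ.plug Δ) β) (h' : Der GwIKt Δ' (tauFS Δ)) :
    Der GwIKt (Γ.plug Δ') β := by
  obtain ⟨n1, h'⟩ := h'
  obtain ⟨n2, hA⟩ := der_tauL Δ Γ h
  exact ⟨max n1 n2 + 1, .cut _ Γ Δ' (tauFS Δ) β rfl
    (h'.mono (le_max_left _ _)) (hA.mono (le_max_right _ _))⟩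

/-- associativity of comma is admissible in GwIKt, in both directions. -/
theorem stmt16_assoc_admissible (Γ : Ctx) (Δ₁ Δ₂ Δ₃ : FS) (β : Fml) :
    Der GwIKt (Γ.plug (.comma Δ₁ (.comma Δ₂ Δ₃))) β ↔
    Der GwIKt (Γ.plug (.comma (.comma Δ₁ Δ₂) Δ₃)) β := by
  constructor
  · intro h
    apply der_replace Γ (.comma Δ₁ (.comma Δ₂ Δ₃)) _ h
    exact der_andR (der_wk1 Δ₃ (der_wk1 Δ₂ (der_tau_self Δ₁)))
      (der_andR (der_wk1 Δ₃ (der_wk2 Δ₁ (der_tau_self Δ₂)))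
        (der_wk2 (.comma Δ₁ Δ₂) (der_tau_self Δ₃)))
  · intro h
    apply der_replace Γ (.comma (.comma Δ₁ Δ₂) Δ₃) _ h
    exact der_andR (der_andR (der_wk1 (.comma Δ₂ Δ₃) (der_tau_self Δ₁))
        (der_wk2 Δ₁ (der_wk1 Δ₃ (der_tau_self Δ₂))))
      (der_wk2 Δ₁ (der_wk2 Δ₂ (der_tau_self Δ₃)))
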